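/- Convex Wasserstein upper bound (Corollary 1 of the paper): under the same setting, the squared 2-Wasserstein distance between N(Hg, G̃ ⊗ Σ_v) and N(y, I_t ⊗ Σ_v) is bounded by ‖Hg − y‖² + t·tr(Σ_v)·(‖g‖² + 1), and the right-hand side is a convex function of g. -/

import Mathlib

open Matrix Kronecker MeasureTheory ProbabilityTheory

/-- Extension of a finite vector by zero. -/
noncomputable def gext {m : ℕ} (g : EuclideanSpace ℝ (Fin m)) (n : ℕ) : ℝ :=
  if h : n < m then g ⟨n, h⟩ else 0

/-- The matrix `G̃ ∈ ℝ^{t×t}` with `G̃_{i,j} = ∑_{n=1}^{m-|i-j|} g_n g_{n+|i-j|}`. -/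
noncomputable def Gtilde {m : ℕ} (t : ℕ) (g : EuclideanSpace ℝ (Fin m)) :
    Matrix (Fin t) (Fin t) ℝ :=
  fun i j =>
    ∑ n ∈ Finset.range (m - ((i : ℤ) - (j : ℤ)).natAbs),
      gext g n * gext g (n + ((i : ℤ) - (j : ℤ)).natAbs)

/-- The multivariate Gaussian measure `N(m, Σ)` on `ι → ℝ`. -/
noncomputable def gaussianVec {ι : Type*} [Fintype ι] [DecidableEq ι]
    (m : ι → ℝ) {S : Matrix ι ι ℝ} (hS : S.PosSemidef) : Measure (ι → ℝ) :=
  (Measure.pi fun _ : ι => gaussianReal 0 1).map fun x => m + ((hS.1.eigenvectorUnitary : Matrix ι ι ℝ) *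
      diagonal (fun i => Real.sqrt (hS.1.eigenvalues i)) *
      (star (hS.1.eigenvectorUnitary : Matrix ι ι ℝ))) *ᵥ x

/-- Squared 2-Wasserstein distance. -/
noncomputable def W2sq {ι : Type*} [Fintype ι] (μ ν : Measure (ι → ℝ)) : ℝ :=
  ⨅ γ : {γ : Measure ((ι → ℝ) × (ι → ℝ)) //
      γ.map Prod.fst = μ ∧ γ.map Prod.snd = ν},
    ∫ p, ∑ i, (p.1 i - p.2 i) ^ 2 ∂(γ : Measure ((ι → ℝ) × (ι → ℝ)))


open Real Filter
open scoped ENNReal NNReal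


lemma pdf01 (x : ℝ) : gaussianPDFReal 0 1 x = (√(2 * π))⁻¹ * rexp (-(2⁻¹) * x ^ 2) := by
  simp only [gaussianPDFReal, NNReal.coe_one, mul_one, sub_zero]
  congr 1
  ring

lemma exp_tendsto_top : Tendsto (fun x : ℝ => rexp (-(4⁻¹:ℝ) * x ^ 2)) atTop (nhds 0) :=
  Real.tendsto_exp_atBot.comp
    ((tendsto_pow_atTop two_ne_zero).const_mul_atTop_of_neg (by norm_num))

lemma exp_tendsto_bot : Tendsto (fun x : ℝ => rexp (-(4⁻¹:ℝ) * x ^ 2)) atBot (nhds 0) := by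
  have := exp_tendsto_top.comp ((tendsto_neg_atBot_atTop : Tendsto (fun x:ℝ => -x) atBot atTop))
  simpa [Function.comp_def, neg_sq] using this

lemma exp2_tendsto_top : Tendsto (fun x : ℝ => rexp (-(2⁻¹:ℝ) * x ^ 2)) atTop (nhds 0) :=
  Real.tendsto_exp_atBot.comp
    ((tendsto_pow_atTop two_ne_zero).const_mul_atTop_of_neg (by norm_num))

lemma exp2_tendsto_bot : Tendsto (fun x : ℝ => rexp (-(2⁻¹:ℝ) * x ^ 2)) atBot (nhds 0) := by
  have := exp2_tendsto_top.comp ((tendsto_neg_atBot_atTop : Tendsto (fun x:ℝ => -x) atBot atTop))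
  simpa [Function.comp_def, neg_sq] using this

lemma abs_le_exp (x : ℝ) : |x| * rexp (-(2⁻¹:ℝ) * x ^ 2) ≤ rexp (-(4⁻¹:ℝ) * x ^ 2) := by
  have h1 : |x| ≤ rexp ((4⁻¹:ℝ) * x ^ 2) := by
    have h2 : |x| ≤ 1 + (4⁻¹:ℝ) * x ^ 2 := by nlinarith [sq_abs x, sq_nonneg (|x| - 2)]
    have := Real.add_one_le_exp ((4⁻¹:ℝ) * x ^ 2)
    linarith
  calc |x| * rexp (-(2⁻¹:ℝ) * x ^ 2) ≤ rexp ((4⁻¹:ℝ) * x ^ 2) * rexp (-(2⁻¹:ℝ) * x ^ 2) := by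
        exact mul_le_mul_of_nonneg_right h1 (exp_pos _).le
    _ = rexp (-(4⁻¹:ℝ) * x ^ 2) := by rw [← Real.exp_add]; ring_nf

lemma sq_le_exp (x : ℝ) : x ^ 2 * rexp (-(2⁻¹:ℝ) * x ^ 2) ≤ 4 * rexp (-(4⁻¹:ℝ) * x ^ 2) := by
  have h1 : x ^ 2 ≤ 4 * rexp ((4⁻¹:ℝ) * x ^ 2) := by
    have h2 : (4⁻¹:ℝ) * x ^ 2 ≤ rexp ((4⁻¹:ℝ) * x ^ 2) := by
      have := Real.add_one_le_exp ((4⁻¹:ℝ) * x ^ 2); linarith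
    linarith
  calc x ^ 2 * rexp (-(2⁻¹:ℝ) * x ^ 2) ≤ (4 * rexp ((4⁻¹:ℝ) * x ^ 2)) * rexp (-(2⁻¹:ℝ) * x ^ 2) :=
        mul_le_mul_of_nonneg_right h1 (exp_pos _).le
    _ = 4 * rexp (-(4⁻¹:ℝ) * x ^ 2) := by rw [mul_assoc, ← Real.exp_add]; ring_nf

lemma integrable_sq_exp : Integrable (fun x : ℝ => x ^ 2 * rexp (-(2⁻¹:ℝ) * x ^ 2)) := by
  refine Integrable.mono' ((integrable_exp_neg_mul_sq (by norm_num : (0:ℝ) < 4⁻¹)).const_mul 4)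
    (Continuous.aestronglyMeasurable (by continuity)) ?_
  refine Filter.Eventually.of_forall fun x => ?_
  rw [norm_mul, norm_of_nonneg (exp_pos _).le, norm_of_nonneg (sq_nonneg x)]
  exact sq_le_exp x

lemma integral_x_exp : ∫ x : ℝ, x * rexp (-(2⁻¹:ℝ) * x ^ 2) = 0 := by
  have hderiv : ∀ x : ℝ, HasDerivAt (fun y : ℝ => -rexp (-(2⁻¹:ℝ) * y ^ 2))
      (x * rexp (-(2⁻¹:ℝ) * x ^ 2)) x := by
    intro x
    have h := (((hasDerivAt_pow 2 x).const_mul (-(2⁻¹:ℝ))).exp).neg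
    exact h.congr_deriv (by rw [show (2:ℕ) - 1 = 1 from rfl, pow_one]; push_cast; ring)
  have hint : Integrable (fun x : ℝ => x * rexp (-(2⁻¹:ℝ) * x ^ 2)) :=
    integrable_mul_exp_neg_mul_sq (by norm_num)
  have h := integral_of_hasDerivAt_of_tendsto hderiv hint (exp2_tendsto_bot.neg) (exp2_tendsto_top.neg)
  simpa using h

lemma integral_sq_exp : ∫ x : ℝ, x ^ 2 * rexp (-(2⁻¹:ℝ) * x ^ 2) = √(2 * π) := by
  have hderiv : ∀ x : ℝ, HasDerivAt (fun y : ℝ => -(y * rexp (-(2⁻¹:ℝ) * y ^ 2)))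
      (x ^ 2 * rexp (-(2⁻¹:ℝ) * x ^ 2) - rexp (-(2⁻¹:ℝ) * x ^ 2)) x := by
    intro x
    have hx : HasDerivAt (fun y : ℝ => rexp (-(2⁻¹:ℝ) * y ^ 2))
        (-(2⁻¹:ℝ) * (2 * x) * rexp (-(2⁻¹:ℝ) * x ^ 2)) x := by
      have := ((hasDerivAt_pow 2 x).const_mul (-(2⁻¹:ℝ))).exp
      convert this using 1; ring
    have h := ((hasDerivAt_id x).mul hx).neg
    refine h.congr_deriv ?_
    simp only [id_eq]
    ring
  have hint2 : Integrable (fun x : ℝ => rexp (-(2⁻¹:ℝ) * x ^ 2)) :=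
    integrable_exp_neg_mul_sq (by norm_num)
  have hint : Integrable (fun x : ℝ =>
      x ^ 2 * rexp (-(2⁻¹:ℝ) * x ^ 2) - rexp (-(2⁻¹:ℝ) * x ^ 2)) := integrable_sq_exp.sub hint2
  have htop : Tendsto (fun x : ℝ => -(x * rexp (-(2⁻¹:ℝ) * x ^ 2))) atTop (nhds 0) := by
    refine squeeze_zero_norm (fun x => ?_) exp_tendsto_top
    rw [norm_neg, norm_mul, norm_of_nonneg (exp_pos _).le, Real.norm_eq_abs]
    exact abs_le_exp x
  have hbot : Tendsto (fun x : ℝ => -(x * rexp (-(2⁻¹:ℝ) * x ^ 2))) atBot (nhds 0) := by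
    refine squeeze_zero_norm (fun x => ?_) exp_tendsto_bot
    rw [norm_neg, norm_mul, norm_of_nonneg (exp_pos _).le, Real.norm_eq_abs]
    exact abs_le_exp x
  have h := integral_of_hasDerivAt_of_tendsto hderiv hint hbot htop
  rw [integral_sub integrable_sq_exp hint2] at h
  have hg : ∫ x : ℝ, rexp (-(2⁻¹:ℝ) * x ^ 2) = √(2 * π) := by
    have := integral_gaussian 2⁻¹
    rw [this, show (π/2⁻¹ : ℝ) = 2*π by ring]
  linarith [h, hg]


lemma integral_gaussianReal01 (f : ℝ → ℝ) :
    ∫ x, f x ∂(gaussianReal 0 1) = ∫ x, gaussianPDFReal 0 1 x * f x := by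
  rw [gaussianReal_of_var_ne_zero 0 one_ne_zero]
  have hmeas : Measurable fun x => (gaussianPDFReal 0 1 x).toNNReal :=
    (measurable_gaussianPDFReal 0 1).real_toNNReal
  have : (gaussianPDF 0 1) = fun x => ((fun x => (gaussianPDFReal 0 1 x).toNNReal) x : ℝ≥0∞) := by
    funext x; simp [gaussianPDF, ENNReal.ofReal]
  rw [this, integral_withDensity_eq_integral_smul hmeas]
  congr 1; funext x
  simp [NNReal.smul_def, Real.coe_toNNReal _ (gaussianPDFReal_nonneg 0 1 x)]

lemma integrable_gaussianReal01 {f : ℝ → ℝ}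
    (h : Integrable (fun x => gaussianPDFReal 0 1 x * f x) (volume : Measure ℝ)) :
    Integrable f (gaussianReal 0 1) := by
  rw [gaussianReal_of_var_ne_zero 0 one_ne_zero]
  have hmeas : Measurable fun x => (gaussianPDFReal 0 1 x).toNNReal :=
    (measurable_gaussianPDFReal 0 1).real_toNNReal
  have hpdf : (gaussianPDF 0 1)
      = fun x => ((fun x => (gaussianPDFReal 0 1 x).toNNReal) x : ℝ≥0∞) := by
    funext x; simp [gaussianPDF, ENNReal.ofReal]
  rw [hpdf]
  exact (integrable_withDensity_iff_integrable_smul (E := ℝ) hmeas (g := f)).mpr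
    (h.congr (ae_of_all _ fun x => by
      simp [NNReal.smul_def, Real.coe_toNNReal _ (gaussianPDFReal_nonneg 0 1 x)]))

lemma integrable_id_gaussian : Integrable (fun x : ℝ => x) (gaussianReal 0 1) := by
  apply integrable_gaussianReal01
  have h := (integrable_mul_exp_neg_mul_sq (show (0:ℝ) < 2⁻¹ by norm_num)).const_mul
    ((√(2*π))⁻¹)
  exact h.congr (ae_of_all _ fun x => by simp only [pdf01]; ring)

lemma integrable_sq_gaussian : Integrable (fun x : ℝ => x ^ 2) (gaussianReal 0 1) := by
  apply integrable_gaussianReal01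
  have h := integrable_sq_exp.const_mul ((√(2*π))⁻¹)
  exact h.congr (ae_of_all _ fun x => by simp only [pdf01]; ring)

lemma integral_id_gaussian : ∫ x, x ∂(gaussianReal 0 1) = 0 := by
  rw [integral_gaussianReal01]
  have : ∀ x : ℝ, gaussianPDFReal 0 1 x * x = (√(2*π))⁻¹ * (x * rexp (-(2⁻¹:ℝ) * x ^ 2)) :=
    fun x => by rw [pdf01]; ring
  simp_rw [this, integral_const_mul, integral_x_exp, mul_zero]

lemma integral_sq_gaussian : ∫ x, x ^ 2 ∂(gaussianReal 0 1) = 1 := by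
  rw [integral_gaussianReal01]
  have : ∀ x : ℝ, gaussianPDFReal 0 1 x * x ^ 2
      = (√(2*π))⁻¹ * (x ^ 2 * rexp (-(2⁻¹:ℝ) * x ^ 2)) := fun x => by rw [pdf01]; ring
  simp_rw [this, integral_const_mul, integral_sq_exp]
  rw [inv_mul_cancel₀]
  positivity


section Pi
variable {κ : Type*} [Fintype κ] [DecidableEq κ]

local notation "ρ" => Measure.pi (fun _ : κ => gaussianReal 0 1)

lemma pi_eval (j : κ) :
    Integrable (fun x : κ → ℝ => x j) ρ ∧ ∫ x : κ → ℝ, x j ∂ρ = 0 := by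
  letI : MeasureSpace ℝ := ⟨gaussianReal 0 1⟩
  haveI : IsProbabilityMeasure (volume : Measure ℝ) :=
    inferInstanceAs (IsProbabilityMeasure (gaussianReal 0 1))
  have hvol : ρ = (volume : Measure (κ → ℝ)) := rfl
  set f : κ → ℝ → ℝ := fun i t => if i = j then t else 1 with hf
  have hprod : ∀ x : κ → ℝ, x j = ∏ i, f i (x i) := by
    intro x
    rw [hf, Finset.prod_ite_eq' Finset.univ j (fun i => x i), if_pos (Finset.mem_univ j)]
  have hint : ∀ i, Integrable (f i) (volume : Measure ℝ) := by
    intro i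
    by_cases hij : i = j
    · subst hij; simp only [hf, if_pos rfl]; exact integrable_id_gaussian
    · simp only [hf, if_neg hij]; exact integrable_const 1
  constructor
  · exact ((Integrable.fintype_prod (f := f) hint).congr
      (ae_of_all _ fun x => (hprod x).symm))
  · simp_rw [hprod, hvol]
    rw [show (volume : Measure (κ → ℝ)) = Measure.pi (fun _ => volume) from rfl,
      MeasureTheory.integral_fintype_prod_eq_prod f]
    refine Finset.prod_eq_zero (Finset.mem_univ j) ?_
    simp only [hf, if_pos rfl]
    exact integral_id_gaussian

lemma pi_mul_same (j : κ) :
    Integrable (fun x : κ → ℝ => x j * x j) ρ ∧ ∫ x : κ → ℝ, x j * x j ∂ρ = 1 := by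
  letI : MeasureSpace ℝ := ⟨gaussianReal 0 1⟩
  haveI : IsProbabilityMeasure (volume : Measure ℝ) :=
    inferInstanceAs (IsProbabilityMeasure (gaussianReal 0 1))
  have hvol : ρ = (volume : Measure (κ → ℝ)) := rfl
  set f : κ → ℝ → ℝ := fun i t => if i = j then t * t else 1 with hf
  have hprod : ∀ x : κ → ℝ, x j * x j = ∏ i, f i (x i) := by
    intro x
    rw [hf, Finset.prod_ite_eq' Finset.univ j (fun i => x i * x i), if_pos (Finset.mem_univ j)]
  have hint : ∀ i, Integrable (f i) (volume : Measure ℝ) := by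
    intro i
    by_cases hij : i = j
    · subst hij; simp only [hf, if_pos rfl]
      exact integrable_sq_gaussian.congr (ae_of_all _ fun t => by simp [sq])
    · simp only [hf, if_neg hij]; exact integrable_const 1
  constructor
  · exact ((Integrable.fintype_prod (f := f) hint).congr
      (ae_of_all _ fun x => (hprod x).symm))
  · simp_rw [hprod, hvol]
    rw [show (volume : Measure (κ → ℝ)) = Measure.pi (fun _ => volume) from rfl,
      MeasureTheory.integral_fintype_prod_eq_prod f]
    refine Finset.prod_eq_one fun i _ => ?_
    by_cases hij : i = j
    · subst hij
      simp only [hf, if_pos rfl]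
      rw [show (fun t : ℝ => t * t) = fun t : ℝ => t ^ 2 by funext t; ring]
      exact integral_sq_gaussian
    · simp only [hf, if_neg hij]
      simp

lemma pi_mul_ne {j k : κ} (hjk : j ≠ k) :
    Integrable (fun x : κ → ℝ => x j * x k) ρ ∧ ∫ x : κ → ℝ, x j * x k ∂ρ = 0 := by
  letI : MeasureSpace ℝ := ⟨gaussianReal 0 1⟩
  haveI : IsProbabilityMeasure (volume : Measure ℝ) :=
    inferInstanceAs (IsProbabilityMeasure (gaussianReal 0 1))
  have hvol : ρ = (volume : Measure (κ → ℝ)) := rfl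
  set f : κ → ℝ → ℝ := fun i t => (if i = j then t else 1) * (if i = k then t else 1) with hf
  have hprod : ∀ x : κ → ℝ, x j * x k = ∏ i, f i (x i) := by
    intro x
    rw [hf]
    simp only [Finset.prod_mul_distrib]
    rw [Finset.prod_ite_eq' Finset.univ j (fun i => x i),
      Finset.prod_ite_eq' Finset.univ k (fun i => x i)]
    simp
  have hint : ∀ i, Integrable (f i) (volume : Measure ℝ) := by
    intro i
    by_cases hij : i = j
    · subst hij
      simp only [hf, if_pos rfl, if_neg hjk, mul_one]
      exact integrable_id_gaussian
    · by_cases hik : i = k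
      · subst hik
        simp only [hf, if_neg hij, if_pos rfl, one_mul]
        exact integrable_id_gaussian
      · simp only [hf, if_neg hij, if_neg hik, mul_one]
        exact integrable_const 1
  constructor
  · exact ((Integrable.fintype_prod (f := f) hint).congr
      (ae_of_all _ fun x => (hprod x).symm))
  · simp_rw [hprod, hvol]
    rw [show (volume : Measure (κ → ℝ)) = Measure.pi (fun _ => volume) from rfl,
      MeasureTheory.integral_fintype_prod_eq_prod f]
    refine Finset.prod_eq_zero (Finset.mem_univ j) ?_
    simp only [hf, if_pos rfl, if_neg hjk, mul_one]
    exact integral_id_gaussian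
end Pi


section Pi
variable {κ : Type*} [Fintype κ] [DecidableEq κ]
local notation "ρ" => Measure.pi (fun _ : κ => gaussianReal 0 1)

lemma key_quad (c : ℝ) (v : κ → ℝ) :
    Integrable (fun x : κ → ℝ => (c + ∑ j, v j * x j) ^ 2) ρ ∧
      ∫ x : κ → ℝ, (c + ∑ j, v j * x j) ^ 2 ∂ρ = c ^ 2 + ∑ j, v j ^ 2 := by
  have hFeq : ∀ x : κ → ℝ, (c + ∑ j, v j * x j) ^ 2
      = c ^ 2 + ((∑ j, (2 * c * v j) * x j) + ∑ j, ∑ k, (v j * v k) * (x j * x k)) := by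
    intro x
    have h1 : (∑ j, v j * x j) ^ 2 = ∑ j, ∑ k, (v j * v k) * (x j * x k) := by
      rw [sq, Finset.sum_mul_sum]
      exact Finset.sum_congr rfl fun j _ => Finset.sum_congr rfl fun k _ => by ring
    have h2 : 2 * c * (∑ j, v j * x j) = ∑ j, (2 * c * v j) * x j := by
      rw [Finset.mul_sum]
      exact Finset.sum_congr rfl fun j _ => by ring
    rw [add_sq, h2, h1, add_assoc]
  have hA : Integrable (fun x : κ → ℝ => ∑ j, (2 * c * v j) * x j) ρ :=
    integrable_finset_sum _ fun j _ => (pi_eval j).1.const_mul _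
  have hB : Integrable (fun x : κ → ℝ => ∑ j, ∑ k, (v j * v k) * (x j * x k)) ρ := by
    refine integrable_finset_sum _ fun j _ => integrable_finset_sum _ fun k _ => ?_
    by_cases h : j = k
    · subst h; exact (pi_mul_same j).1.const_mul _
    · exact (pi_mul_ne h).1.const_mul _
  haveI : IsProbabilityMeasure (ρ) := inferInstance
  constructor
  · exact (((integrable_const (c ^ 2)).add (hA.add hB)).congr
      (ae_of_all _ fun x => (hFeq x).symm))
  · have hAB : Integrable (fun x : κ → ℝ =>
        (∑ j, (2 * c * v j) * x j) + ∑ j, ∑ k, (v j * v k) * (x j * x k)) ρ := hA.add hB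
    rw [integral_congr_ae (ae_of_all _ hFeq), integral_add (integrable_const _) hAB,
      integral_add hA hB, integral_const]
    have hAv : ∫ x : κ → ℝ, ∑ j, (2 * c * v j) * x j ∂ρ = 0 := by
      rw [integral_finset_sum _ fun j _ => (pi_eval j).1.const_mul _]
      simp_rw [integral_const_mul]
      simp [fun j : κ => (pi_eval j).2]
    have hBv : ∫ x : κ → ℝ, ∑ j, ∑ k, (v j * v k) * (x j * x k) ∂ρ = ∑ j, v j ^ 2 := by
      rw [integral_finset_sum]
      swap
      · exact fun j _ => integrable_finset_sum _ fun k _ => by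
          by_cases h : j = k
          · subst h; exact (pi_mul_same j).1.const_mul _
          · exact (pi_mul_ne h).1.const_mul _
      refine Finset.sum_congr rfl fun j _ => ?_
      rw [integral_finset_sum]
      swap
      · exact fun k _ => by
          by_cases h : j = k
          · subst h; exact (pi_mul_same j).1.const_mul _
          · exact (pi_mul_ne h).1.const_mul _
      rw [Finset.sum_eq_single j]
      · rw [integral_const_mul, (pi_mul_same j).2]; ring
      · intro k _ hkj
        rw [integral_const_mul, (pi_mul_ne (Ne.symm hkj)).2, mul_zero]
      · intro h; exact absurd (Finset.mem_univ j) h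
    rw [hAv, hBv]
    simp
end Pi






section Pi
variable {κ : Type*} [Fintype κ] [DecidableEq κ]
section Main

variable {ι : Type*} [Fintype ι] [DecidableEq ι]

lemma continuous_mulVec (A : Matrix ι ι ℝ) : Continuous (fun x : ι → ℝ => A *ᵥ x) := by
  have h := A.mulVecLin.continuous_of_finiteDimensional
  exact h

lemma psd_sqrt_facts {S : Matrix ι ι ℝ} (hS : S.PosSemidef) :
    (∀ i j, ((hS.1.eigenvectorUnitary : Matrix ι ι ℝ) *
      diagonal (fun i => Real.sqrt (hS.1.eigenvalues i)) *
      (star (hS.1.eigenvectorUnitary : Matrix ι ι ℝ))) j i =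
      ((hS.1.eigenvectorUnitary : Matrix ι ι ℝ) *
      diagonal (fun i => Real.sqrt (hS.1.eigenvalues i)) *
      (star (hS.1.eigenvectorUnitary : Matrix ι ι ℝ))) i j) ∧
    ((hS.1.eigenvectorUnitary : Matrix ι ι ℝ) *
      diagonal (fun i => Real.sqrt (hS.1.eigenvalues i)) *
      (star (hS.1.eigenvectorUnitary : Matrix ι ι ℝ))) *
    ((hS.1.eigenvectorUnitary : Matrix ι ι ℝ) *
      diagonal (fun i => Real.sqrt (hS.1.eigenvalues i)) *
      (star (hS.1.eigenvectorUnitary : Matrix ι ι ℝ))) = S := by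
  set U : Matrix ι ι ℝ := (hS.1.eigenvectorUnitary : Matrix ι ι ℝ) with hU
  constructor
  · intro i j
    have hT : (U * diagonal (fun i => Real.sqrt (hS.1.eigenvalues i)) * star U)ᵀ
        = U * diagonal (fun i => Real.sqrt (hS.1.eigenvalues i)) * star U := by
      simp [Matrix.transpose_mul, Matrix.star_eq_conjTranspose, Matrix.mul_assoc]
    exact congrFun (congrFun hT i) j
  · have hUU : star U * U = 1 := Unitary.coe_star_mul_self _
    have hD : diagonal (fun i => Real.sqrt (hS.1.eigenvalues i)) *
        diagonal (fun i => Real.sqrt (hS.1.eigenvalues i)) = diagonal hS.1.eigenvalues := by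
      rw [diagonal_mul_diagonal]
      congr 1; funext i; exact Real.mul_self_sqrt (hS.eigenvalues_nonneg i)
    have hspec := hS.1.spectral_theorem
    rw [Unitary.conjStarAlgAut_apply] at hspec
    calc _ = U * (diagonal (fun i => Real.sqrt (hS.1.eigenvalues i)) * (star U * U) *
          diagonal (fun i => Real.sqrt (hS.1.eigenvalues i))) * star U := by
            simp only [Matrix.mul_assoc]
      _ = S := by
        rw [hUU, Matrix.mul_one, hD]
        conv_rhs => rw [hspec]
        simp [hU]

/-- The cost of the product coupling. -/
lemma coupling_cost (m1 m2 : ι → ℝ) {S1 S2 : Matrix ι ι ℝ}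
    (hS1 : S1.PosSemidef) (hS2 : S2.PosSemidef) :
    W2sq (gaussianVec m1 hS1) (gaussianVec m2 hS2) ≤
      ∑ i, (m1 i - m2 i) ^ 2 + (S1.trace + S2.trace) := by
  classical
  set A := ((hS1.1.eigenvectorUnitary : Matrix ι ι ℝ) *
      diagonal (fun i => Real.sqrt (hS1.1.eigenvalues i)) *
      (star (hS1.1.eigenvectorUnitary : Matrix ι ι ℝ))) with hA
  set B := ((hS2.1.eigenvectorUnitary : Matrix ι ι ℝ) *
      diagonal (fun i => Real.sqrt (hS2.1.eigenvalues i)) *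
      (star (hS2.1.eigenvectorUnitary : Matrix ι ι ℝ))) with hB
  set ρ : Measure (ι → ℝ) := Measure.pi (fun _ : ι => gaussianReal 0 1) with hρ
  haveI : IsProbabilityMeasure ρ := by rw [hρ]; infer_instance
  set φ1 : (ι → ℝ) → (ι → ℝ) := fun x => m1 + A *ᵥ x with hφ1
  set φ2 : (ι → ℝ) → (ι → ℝ) := fun x => m2 + B *ᵥ x with hφ2
  have hφ1m : Measurable φ1 := (continuous_const.add (continuous_mulVec A)).measurable
  have hφ2m : Measurable φ2 := (continuous_const.add (continuous_mulVec B)).measurable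
  set ψ : ((ι → ℝ) × (ι → ℝ)) → ((ι → ℝ) × (ι → ℝ)) := fun p => (φ1 p.1, φ2 p.2) with hψ
  have hψm : Measurable ψ := (hφ1m.comp measurable_fst).prodMk (hφ2m.comp measurable_snd)
  set γ : Measure ((ι → ℝ) × (ι → ℝ)) := (ρ.prod ρ).map ψ with hγ
  have hmarg1 : γ.map Prod.fst = gaussianVec m1 hS1 := by
    rw [hγ, Measure.map_map measurable_fst hψm]
    have : (Prod.fst ∘ ψ) = φ1 ∘ Prod.fst := rfl
    rw [this, ← Measure.map_map hφ1m measurable_fst, Measure.map_fst_prod]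
    simp [gaussianVec, hρ]
    rfl
  have hmarg2 : γ.map Prod.snd = gaussianVec m2 hS2 := by
    rw [hγ, Measure.map_map measurable_snd hψm]
    have : (Prod.snd ∘ ψ) = φ2 ∘ Prod.snd := rfl
    rw [this, ← Measure.map_map hφ2m measurable_snd, Measure.map_snd_prod]
    simp [gaussianVec, hρ]
    rfl
  -- the cost function
  set F : ((ι → ℝ) × (ι → ℝ)) → ℝ := fun p => ∑ i, (p.1 i - p.2 i) ^ 2 with hF
  have hFc : Continuous F := by
    apply continuous_finset_sum
    intro i _
    exact (((continuous_apply i).comp continuous_fst).sub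
      ((continuous_apply i).comp continuous_snd)).pow 2
  -- bound W2sq by the cost of γ
  have hle : W2sq (gaussianVec m1 hS1) (gaussianVec m2 hS2) ≤ ∫ p, F p ∂γ := by
    have hbdd : BddBelow (Set.range fun γ' : {γ' : Measure ((ι → ℝ) × (ι → ℝ)) //
        γ'.map Prod.fst = gaussianVec m1 hS1 ∧ γ'.map Prod.snd = gaussianVec m2 hS2} =>
        ∫ p, ∑ i, (p.1 i - p.2 i) ^ 2 ∂(γ' : Measure ((ι → ℝ) × (ι → ℝ)))) := by
      refine ⟨0, fun z hz => ?_⟩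
      obtain ⟨γ', rfl⟩ := hz
      exact integral_nonneg fun p => Finset.sum_nonneg fun i _ => sq_nonneg _
    exact ciInf_le hbdd ⟨γ, hmarg1, hmarg2⟩
  refine hle.trans ?_
  -- compute the cost of γ
  have hcost : ∫ p, F p ∂γ = ∫ p, F (ψ p) ∂(ρ.prod ρ) := by
    rw [hγ, integral_map hψm.aemeasurable hFc.aestronglyMeasurable]
  rw [hcost]
  -- move to the sum-index pi measure
  set ρκ : Measure ((i : ι ⊕ ι) → ℝ) := Measure.pi (fun _ : ι ⊕ ι => gaussianReal 0 1) with hρκ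
  have hmp : MeasurePreserving (MeasurableEquiv.sumPiEquivProdPi (fun _ : ι ⊕ ι => ℝ))
      ρκ (ρ.prod ρ) := measurePreserving_sumPiEquivProdPi (fun _ : ι ⊕ ι => gaussianReal 0 1)
  rw [← hmp.integral_comp']
  -- now the integrand as a quadratic in iid gaussians
  set d : ι → ℝ := fun i => m1 i - m2 i with hd
  set V : ι → (ι ⊕ ι) → ℝ := fun i => Sum.elim (fun j => A i j) (fun j => -B i j) with hV
  have hpoint : ∀ w : (i : ι ⊕ ι) → ℝ,
      F (ψ (MeasurableEquiv.sumPiEquivProdPi (fun _ : ι ⊕ ι => ℝ) w))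
        = ∑ i, (d i + ∑ j, V i j * w j) ^ 2 := by
    intro w
    refine Finset.sum_congr rfl fun i _ => ?_
    have hw : (MeasurableEquiv.sumPiEquivProdPi (fun _ : ι ⊕ ι => ℝ) w)
        = (fun j => w (Sum.inl j), fun j => w (Sum.inr j)) := rfl
    rw [hw]
    simp only [hψ, hφ1, hφ2, Pi.add_apply]
    rw [hV]
    rw [Fintype.sum_sum_type]
    simp only [Sum.elim_inl, Sum.elim_inr]
    rw [Matrix.mulVec, Matrix.mulVec, dotProduct, dotProduct]
    rw [hd]
    simp only [neg_mul, Finset.sum_neg_distrib]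
    ring
  rw [integral_congr_ae (ae_of_all _ hpoint)]
  rw [integral_finset_sum _ (fun i _ => (key_quad (d i) (V i)).1)]
  have hval : ∀ i, ∫ w, (d i + ∑ j, V i j * w j) ^ 2 ∂ρκ = d i ^ 2 + ∑ j, V i j ^ 2 :=
    fun i => (key_quad (d i) (V i)).2
  simp_rw [← hρκ, hval]
  rw [Finset.sum_add_distrib]
  have hVA : ∀ i : ι, ∑ j : ι ⊕ ι, V i j ^ 2 = (∑ j, A i j ^ 2) + ∑ j, B i j ^ 2 := by
    intro i
    rw [hV, Fintype.sum_sum_type]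
    simp [neg_sq]
  have htrA : ∑ i, ∑ j, A i j ^ 2 = S1.trace := by
    have hsym : ∀ i j, A j i = A i j := fun i j => by
      exact (psd_sqrt_facts hS1).1 i j
    calc ∑ i, ∑ j, A i j ^ 2 = ∑ i, ∑ j, A i j * A j i := by
          refine Finset.sum_congr rfl fun i _ => Finset.sum_congr rfl fun j _ => ?_
          rw [hsym i j]; ring
      _ = (A * A).trace := by
          rw [Matrix.trace]
          refine (Finset.sum_congr rfl fun i _ => ?_).symm
          rw [Matrix.diag_apply, Matrix.mul_apply]
      _ = S1.trace := by rw [hA, (psd_sqrt_facts hS1).2]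
  have htrB : ∑ i, ∑ j, B i j ^ 2 = S2.trace := by
    have hsym : ∀ i j, B j i = B i j := fun i j => by
      exact (psd_sqrt_facts hS2).1 i j
    calc ∑ i, ∑ j, B i j ^ 2 = ∑ i, ∑ j, B i j * B j i := by
          refine Finset.sum_congr rfl fun i _ => Finset.sum_congr rfl fun j _ => ?_
          rw [hsym i j]; ring
      _ = (B * B).trace := by
          rw [Matrix.trace]
          refine (Finset.sum_congr rfl fun i _ => ?_).symm
          rw [Matrix.diag_apply, Matrix.mul_apply]
      _ = S2.trace := by rw [hB, (psd_sqrt_facts hS2).2]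
  simp_rw [hVA]
  rw [Finset.sum_add_distrib, htrA, htrB]
end Main



lemma norm_sq_eq {m : ℕ} (g : EuclideanSpace ℝ (Fin m)) : ‖g‖ ^ 2 = ∑ k, g k ^ 2 := by
  rw [EuclideanSpace.norm_eq, Real.sq_sqrt (by positivity)]
  simp [sq_abs]

lemma trace_Gtilde {m : ℕ} (t : ℕ) (g : EuclideanSpace ℝ (Fin m)) :
    (Gtilde t g).trace = (t : ℝ) * ‖g‖ ^ 2 := by
  have hdiag : ∀ i : Fin t, (Gtilde t g).diag i = ‖g‖ ^ 2 := by
    intro i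
    rw [Matrix.diag_apply]
    show (∑ n ∈ Finset.range (m - ((i : ℤ) - (i : ℤ)).natAbs),
      gext g n * gext g (n + ((i : ℤ) - (i : ℤ)).natAbs)) = ‖g‖ ^ 2
    simp only [sub_self, Int.natAbs_zero, Nat.sub_zero, add_zero]
    rw [norm_sq_eq, ← Fin.sum_univ_eq_sum_range (fun n => gext g n * gext g n) m]
    refine Finset.sum_congr rfl fun k _ => ?_
    rw [gext, dif_pos k.isLt]
    simp [sq]
  rw [Matrix.trace]
  simp_rw [hdiag]
  simp [mul_comm]

lemma trace_Sv_nonneg {ny : ℕ} {Sv : Matrix (Fin ny) (Fin ny) ℝ} (hSv : Sv.PosSemidef) :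
    0 ≤ Sv.trace := by
  rw [Matrix.trace]
  refine Finset.sum_nonneg fun i _ => ?_
  exact hSv.diag_nonneg

lemma sq_convex {a b p q r : ℝ} (ha : 0 ≤ a) (hb : 0 ≤ b) (hab : a + b = 1) :
    (a * p + b * q - r) ^ 2 ≤ a * (p - r) ^ 2 + b * (q - r) ^ 2 := by
  have hb1 : b = 1 - a := by linarith
  subst hb1
  nlinarith [mul_nonneg ha (by linarith : (0:ℝ) ≤ 1 - a), sq_nonneg (p - q)]

lemma convex_part {t m ny : ℕ} (H : Matrix (Fin t × Fin ny) (Fin m) ℝ)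
    (y : Fin t × Fin ny → ℝ) {Sv : Matrix (Fin ny) (Fin ny) ℝ} (hSv : Sv.PosSemidef) :
    ConvexOn ℝ Set.univ
      (fun g : EuclideanSpace ℝ (Fin m) =>
        ∑ i, ((H *ᵥ ⇑g) i - y i) ^ 2 + (t : ℝ) * Sv.trace * (‖g‖ ^ 2 + 1)) := by
  have hc : 0 ≤ (t : ℝ) * Sv.trace :=
    mul_nonneg (Nat.cast_nonneg t) (trace_Sv_nonneg hSv)
  refine ⟨convex_univ, fun x _ z _ a b ha hb hab => ?_⟩
  set c := (t : ℝ) * Sv.trace with hcdef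
  have hb' : b = 1 - a := by linarith
  have hcoe : ⇑(a • x + b • z) = a • (⇑x : Fin m → ℝ) + b • (⇑z : Fin m → ℝ) := by
    funext k; simp
  have hmul : ∀ i, (H *ᵥ ⇑(a • x + b • z)) i = a * (H *ᵥ ⇑x) i + b * (H *ᵥ ⇑z) i := by
    intro i
    rw [hcoe, Matrix.mulVec_add, Matrix.mulVec_smul, Matrix.mulVec_smul]
    simp
  have h1 : ∑ i, ((H *ᵥ ⇑(a • x + b • z)) i - y i) ^ 2
      ≤ a * ∑ i, ((H *ᵥ ⇑x) i - y i) ^ 2 + b * ∑ i, ((H *ᵥ ⇑z) i - y i) ^ 2 := by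
    rw [Finset.mul_sum, Finset.mul_sum, ← Finset.sum_add_distrib]
    refine Finset.sum_le_sum fun i _ => ?_
    rw [hmul i]
    exact sq_convex ha hb hab
  have h2 : ‖a • x + b • z‖ ^ 2 ≤ a * ‖x‖ ^ 2 + b * ‖z‖ ^ 2 := by
    rw [norm_sq_eq, norm_sq_eq, norm_sq_eq, Finset.mul_sum, Finset.mul_sum,
      ← Finset.sum_add_distrib]
    refine Finset.sum_le_sum fun k _ => ?_
    have : (a • x + b • z) k = a * x k + b * z k := by simp
    rw [this]
    have h := sq_convex (p := x k) (q := z k) (r := 0) ha hb hab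
    simpa using h
  calc ∑ i, ((H *ᵥ ⇑(a • x + b • z)) i - y i) ^ 2 + c * (‖a • x + b • z‖ ^ 2 + 1)
      ≤ (a * ∑ i, ((H *ᵥ ⇑x) i - y i) ^ 2 + b * ∑ i, ((H *ᵥ ⇑z) i - y i) ^ 2)
        + c * ((a * ‖x‖ ^ 2 + b * ‖z‖ ^ 2) + 1) :=
        add_le_add h1 (mul_le_mul_of_nonneg_left (by linarith) hc)
    _ = a * (∑ i, ((H *ᵥ ⇑x) i - y i) ^ 2 + c * (‖x‖ ^ 2 + 1))
        + b * (∑ i, ((H *ᵥ ⇑z) i - y i) ^ 2 + c * (‖z‖ ^ 2 + 1)) := by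
        rw [hb']; ring

theorem convex_wasserstein_upper_bound {t m ny : ℕ}
    (ht : 1 ≤ t) (hm : 1 ≤ m)
    (H : Matrix (Fin t × Fin ny) (Fin m) ℝ) (y : Fin t × Fin ny → ℝ)
    {Sv : Matrix (Fin ny) (Fin ny) ℝ} (hSv : Sv.PosSemidef) :
    (∀ (g : EuclideanSpace ℝ (Fin m))
        (hGS : ((Gtilde t g) ⊗ₖ Sv).PosSemidef)
        (hIS : ((1 : Matrix (Fin t) (Fin t) ℝ) ⊗ₖ Sv).PosSemidef),
      W2sq (gaussianVec (H *ᵥ ⇑g) hGS) (gaussianVec y hIS) ≤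
        ∑ i, ((H *ᵥ ⇑g) i - y i) ^ 2 + (t : ℝ) * Sv.trace * (‖g‖ ^ 2 + 1))
    ∧ ConvexOn ℝ Set.univ
        (fun g : EuclideanSpace ℝ (Fin m) =>
          ∑ i, ((H *ᵥ ⇑g) i - y i) ^ 2 + (t : ℝ) * Sv.trace * (‖g‖ ^ 2 + 1)) := by
  constructor
  · intro g hGS hIS
    have h := coupling_cost (H *ᵥ ⇑g) y hGS hIS
    refine h.trans (le_of_eq ?_)
    rw [Matrix.trace_kronecker, Matrix.trace_kronecker, trace_Gtilde, Matrix.trace_one]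
    simp only [Fintype.card_fin]
    push_cast
    ring
  · exact convex_part H y hSv
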